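/- Let G be a 1-subdivided star with center a, middle vertices b_1, …, b_n and leaves c_1, …, c_n, with weight function w satisfying w(c_1) ≥ w(c_2) ≥ … ≥ w(c_n), and w(b_i) ≤ w(b_j) whenever i ≤ j and w(c_i) = w(c_j). For 0 ≤ i ≤ n define d_i as the maximum of the following quantities: Σ_{ℓ=1}^{j} w(b_ℓ) + w(c_j) for each 1 ≤ j ≤ i; Σ_{ℓ=1}^{i} w(b_ℓ) + w(a) + w(b_j) + w(c_j) for each i < j ≤ n; and, when i = n, the quantity Σ_{ℓ=1}^{n} w(b_ℓ) + w(a). Then wtd(G) = min_{0 ≤ i ≤ n} d_i. -/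

import Mathlib

/-- A treedepth decomposition of a simple graph `G`: a partial order `le` on the
vertices such that the set of elements below any vertex is linearly ordered, and
the endpoints of every edge are comparable. -/
structure TDDecomp {V : Type*} (G : SimpleGraph V) where
  le : V → V → Prop
  le_refl : ∀ x, le x x
  le_antisymm : ∀ x y, le x y → le y x → x = y
  le_trans : ∀ x y z, le x y → le y z → le x z
  down_linear : ∀ x y z, le y x → le z x → le y z ∨ le z y
  adj_comparable : ∀ u v, G.Adj u v → le u v ∨ le v u

/-- A chain of a treedepth decomposition: a finite set of pairwise comparable vertices. -/
def TDDecomp.IsChain {V : Type*} {G : SimpleGraph V} (T : TDDecomp G) (C : Finset V) : Prop :=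
  ∀ x ∈ C, ∀ y ∈ C, T.le x y ∨ T.le y x

/-- The weighted depth of a treedepth decomposition: the maximum over all chains `C`
of the total weight of `C`. -/
noncomputable def TDDecomp.weightedDepth {V : Type*} {G : SimpleGraph V}
    (T : TDDecomp G) (w : V → ℕ) : ℕ :=
  sSup {s | ∃ C : Finset V, T.IsChain C ∧ s = C.sum w}

/-- The weighted treedepth of `G` with weight function `w`: the minimum weighted depth
over all treedepth decompositions of `G`. -/
noncomputable def wtd {V : Type*} (G : SimpleGraph V) (w : V → ℕ) : ℕ :=
  sInf {s | ∃ T : TDDecomp G, s = T.weightedDepth w}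

/-- Vertices of a 1-subdivided star with `n` branches: the center `a`, the middle
vertices `b_1, …, b_n` and the leaves `c_1, …, c_n`. -/
inductive StarV (n : ℕ) where
  | center : StarV n
  | mid : Fin n → StarV n
  | leaf : Fin n → StarV n

/-- The 1-subdivided star: edges are exactly `a b_i` and `b_i c_i` for `1 ≤ i ≤ n`. -/
def subdivStar (n : ℕ) : SimpleGraph (StarV n) :=
  SimpleGraph.fromRel (fun x y =>
    (∃ i, x = StarV.center ∧ y = StarV.mid i) ∨
    (∃ i, x = StarV.mid i ∧ y = StarV.leaf i))

/-- `midSum n w m` is the sum `Σ_{ℓ=1}^{m} w(b_ℓ)` of the weights of the first `m`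
middle vertices (0-based: indices `ℓ` with `ℓ < m`). -/
def midSum (n : ℕ) (w : StarV n → ℕ) (m : ℕ) : ℕ :=
  ∑ ℓ ∈ Finset.univ.filter (fun ℓ : Fin n => (ℓ : ℕ) < m), w (StarV.mid ℓ)

/-- `dval n w i` is the weighted depth `d_i` of the candidate decomposition `T_i`:
the maximum of `Σ_{ℓ=1}^{j} w(b_ℓ) + w(c_j)` over `1 ≤ j ≤ i`, of
`Σ_{ℓ=1}^{i} w(b_ℓ) + w(a) + w(b_j) + w(c_j)` over `i < j ≤ n`, and, when `i = n`,
of `Σ_{ℓ=1}^{n} w(b_ℓ) + w(a)`.  (Indices `j` are 0-based here, so 1-based `j` with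
`j ≤ i` corresponds to `(j : ℕ) < i`.) -/
def dval (n : ℕ) (w : StarV n → ℕ) (i : ℕ) : ℕ :=
  ((Finset.univ.filter (fun j : Fin n => (j : ℕ) < i)).sup
      (fun j => midSum n w ((j : ℕ) + 1) + w (StarV.leaf j))) ⊔
  ((Finset.univ.filter (fun j : Fin n => i ≤ (j : ℕ))).sup
      (fun j => midSum n w i + w StarV.center + w (StarV.mid j) + w (StarV.leaf j))) ⊔
  (if i = n then midSum n w n + w StarV.center else 0)

namespace Stmt9Aux
open StarV

def starEquiv (n : ℕ) : StarV n ≃ (Unit ⊕ Fin n ⊕ Fin n) where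
  toFun := fun v => match v with
    | .center => .inl ()
    | .mid l => .inr (.inl l)
    | .leaf l => .inr (.inr l)
  invFun := fun s => match s with
    | .inl _ => .center
    | .inr (.inl l) => .mid l
    | .inr (.inr l) => .leaf l
  left_inv := by intro x; cases x <;> rfl
  right_inv := by rintro (x | x | x) <;> rfl

instance {n : ℕ} : DecidableEq (StarV n) := (starEquiv n).decidableEq
instance {n : ℕ} : Fintype (StarV n) := Fintype.ofEquiv _ (starEquiv n).symm

lemma adj_center_mid {n : ℕ} (j : Fin n) : (subdivStar n).Adj .center (.mid j) := by
  rw [subdivStar, SimpleGraph.fromRel_adj]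
  exact ⟨fun h => (nomatch h), Or.inl (Or.inl ⟨j, rfl, rfl⟩)⟩

lemma adj_mid_leaf {n : ℕ} (j : Fin n) : (subdivStar n).Adj (.mid j) (.leaf j) := by
  rw [subdivStar, SimpleGraph.fromRel_adj]
  exact ⟨fun h => (nomatch h), Or.inl (Or.inr ⟨j, rfl, rfl⟩)⟩

lemma chain_below {V : Type*} {G : SimpleGraph V} (T : TDDecomp G) (x : V) (C : Finset V)
    (h : ∀ y ∈ C, T.le y x) : T.IsChain C :=
  fun y hy z hz => T.down_linear x y z (h y hy) (h z hz)

lemma chain_insert_top {V : Type*} [DecidableEq V] {G : SimpleGraph V} (T : TDDecomp G)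
    (x v : V) (C : Finset V) (h : ∀ y ∈ C, T.le y x) (hv : T.le x v) :
    T.IsChain (insert v C) := by
  refine chain_below T v _ (fun y hy => ?_)
  rcases Finset.mem_insert.mp hy with hy | hy
  · exact hy ▸ T.le_refl v
  · exact T.le_trans _ _ _ (h y hy) hv

lemma sum_le_depth {V : Type*} [Fintype V] {G : SimpleGraph V} (T : TDDecomp G) (w : V → ℕ)
    (C : Finset V) (h : T.IsChain C) : C.sum w ≤ T.weightedDepth w := by
  apply le_csSup
  · refine ⟨Finset.univ.sum w, ?_⟩
    rintro s ⟨D, hD, rfl⟩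
    exact Finset.sum_le_sum_of_subset (D.subset_univ)
  · exact ⟨C, h, rfl⟩

lemma exists_chain_max {V : Type*} {G : SimpleGraph V} (T : TDDecomp G) (C : Finset V)
    (hC : T.IsChain C) (hne : C.Nonempty) : ∃ x ∈ C, ∀ y ∈ C, T.le y x := by
  classical
  revert hC hne
  induction C using Finset.induction_on with
  | empty => intro _ hne; simp at hne
  | @insert a C ha ih =>
    intro hC _
    by_cases hCe : C.Nonempty
    · obtain ⟨m, hm, hmax⟩ := ih (fun y hy z hz =>
        hC y (Finset.mem_insert_of_mem hy) z (Finset.mem_insert_of_mem hz)) hCe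
      rcases hC a (Finset.mem_insert_self a C) m (Finset.mem_insert_of_mem hm) with h | h
      · refine ⟨m, Finset.mem_insert_of_mem hm, fun y hy => ?_⟩
        rcases Finset.mem_insert.mp hy with hy | hy
        · exact hy ▸ h
        · exact hmax y hy
      · refine ⟨a, Finset.mem_insert_self a C, fun y hy => ?_⟩
        rcases Finset.mem_insert.mp hy with hy | hy
        · exact hy ▸ T.le_refl a
        · exact T.le_trans _ _ _ (hmax y hy) h
    · obtain rfl : C = ∅ := Finset.not_nonempty_iff_eq_empty.mp hCe
      refine ⟨a, Finset.mem_insert_self a ∅, fun y hy => ?_⟩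
      simp only [Finset.mem_insert, Finset.notMem_empty, or_false] at hy
      exact hy ▸ T.le_refl a

def fmid (n i : ℕ) (l : Fin n) : List ℕ :=
  if (l : ℕ) < i then List.range ((l : ℕ) + 1) else List.range i ++ [n, n + 1 + (l : ℕ)]

def fpath (n i : ℕ) : StarV n → List ℕ
  | .center => List.range i ++ [n]
  | .mid l => fmid n i l
  | .leaf l => fmid n i l ++ [2 * n + 2 + (l : ℕ)]

def tok (n i : ℕ) : StarV n → ℕ
  | .center => n
  | .mid l => if (l : ℕ) < i then (l : ℕ) else n + 1 + (l : ℕ)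
  | .leaf l => 2 * n + 2 + (l : ℕ)

lemma range_prefix_range {a b : ℕ} (h : a ≤ b) : List.range a <+: List.range b := by
  rw [List.prefix_iff_eq_take, List.take_range, List.length_range]
  simp [Nat.min_eq_left h]

lemma fpath_getLast (n i : ℕ) (v : StarV n) : (fpath n i v).getLast? = some (tok n i v) := by
  cases v with
  | center => simp [fpath, tok]
  | mid l =>
    simp only [fpath, fmid, tok]
    split
    · rw [List.range_succ]; simp
    · rw [show [n, n + 1 + (l : ℕ)] = [n] ++ [n + 1 + (l : ℕ)] from rfl, ← List.append_assoc]
      simp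
  | leaf l => simp [fpath, tok]

lemma tok_mem (n i : ℕ) (v : StarV n) : tok n i v ∈ fpath n i v := by
  cases v with
  | center => simp [fpath, tok]
  | mid l =>
    simp only [fpath, fmid, tok]
    split
    · simp
    · simp
  | leaf l => simp [fpath, tok]

lemma tok_inj (n i : ℕ) {x y : StarV n} (h : tok n i x = tok n i y) : x = y := by
  cases x with
  | center =>
    cases y with
    | center => rfl
    | mid m => exfalso; have := m.isLt; simp only [tok] at h; split_ifs at h <;> omega
    | leaf m => exfalso; have := m.isLt; simp only [tok] at h; omega
  | mid l =>
    cases y with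
    | center => exfalso; have := l.isLt; simp only [tok] at h; split_ifs at h <;> omega
    | mid m =>
      have hl := l.isLt; have hm := m.isLt; simp only [tok] at h
      split_ifs at h <;> (congr 1; exact Fin.ext (by omega))
    | leaf m => exfalso; have := l.isLt; have := m.isLt; simp only [tok] at h; split_ifs at h <;> omega
  | leaf l =>
    cases y with
    | center => exfalso; have := l.isLt; simp only [tok] at h; omega
    | mid m => exfalso; have := l.isLt; have := m.isLt; simp only [tok] at h; split_ifs at h <;> omega
    | leaf m => have hl := l.isLt; have hm := m.isLt; simp only [tok] at h; congr 1; exact Fin.ext (by omega)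

def TDi (n i : ℕ) (hi : i ≤ n) : TDDecomp (subdivStar n) where
  le x y := fpath n i x <+: fpath n i y
  le_refl x := List.prefix_refl _
  le_antisymm x y h1 h2 := by
    have he : fpath n i x = fpath n i y := h1.eq_of_length (le_antisymm h1.length_le h2.length_le)
    have h3 : some (tok n i x) = some (tok n i y) := by
      rw [← fpath_getLast, ← fpath_getLast, he]
    exact tok_inj n i (Option.some.inj h3)
  le_trans x y z h1 h2 := h1.trans h2
  down_linear x y z h1 h2 := List.prefix_or_prefix_of_prefix h1 h2
  adj_comparable u v huv := by
    rw [subdivStar, SimpleGraph.fromRel_adj] at huv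
    obtain ⟨hne, h | h⟩ := huv
    all_goals rcases h with ⟨j, hu, hv⟩ | ⟨j, hu, hv⟩ <;> subst hu <;> subst hv
    · -- center, mid j
      by_cases hj : (j : ℕ) < i
      · right
        simp only [fpath, fmid, if_pos hj]
        exact (range_prefix_range hj).trans (List.prefix_append _ _)
      · left
        simp only [fpath, fmid, if_neg hj]
        refine ⟨[n + 1 + (j : ℕ)], ?_⟩
        simp
    · -- mid j, leaf j
      left
      simp only [fpath]
      exact List.prefix_append _ _
    · -- mid j, center (reversed)
      by_cases hj : (j : ℕ) < i
      · left
        simp only [fpath, fmid, if_pos hj]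
        exact (range_prefix_range hj).trans (List.prefix_append _ _)
      · right
        simp only [fpath, fmid, if_neg hj]
        refine ⟨[n + 1 + (j : ℕ)], ?_⟩
        simp
    · -- leaf j, mid j (reversed)
      right
      simp only [fpath]
      exact List.prefix_append _ _

end Stmt9Aux


namespace Stmt9Aux
open StarV Finset

lemma prefix_concat_cases {p q : List ℕ} {a : ℕ} (h : p <+: q ++ [a]) :
    p <+: q ∨ p = q ++ [a] := by
  rcases List.prefix_or_prefix_of_prefix h (List.prefix_append q [a]) with hpq | hqp
  · exact Or.inl hpq
  · have h1 := hqp.length_le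
    have h2 := h.length_le
    rw [List.length_append, List.length_singleton] at h2
    rcases Nat.lt_or_ge p.length (q.length + 1) with hlt | hge
    · left
      have : p.length = q.length := by omega
      have := hqp.eq_of_length this.symm
      rw [← this]
    · right
      exact h.eq_of_length (by rw [List.length_append, List.length_singleton]; omega)

lemma le_center_inv {n i : ℕ} (hi : i ≤ n) {y : StarV n}
    (h : fpath n i y <+: fpath n i .center) :
    y = .center ∨ ∃ l : Fin n, y = .mid l ∧ (l : ℕ) < i := by
  have hm : tok n i y ∈ fpath n i StarV.center := h.subset (tok_mem n i y)
  simp only [fpath, List.mem_append, List.mem_range, List.mem_singleton] at hm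
  cases y with
  | center => exact Or.inl rfl
  | mid l =>
    refine Or.inr ⟨l, rfl, ?_⟩
    have := l.isLt
    simp only [tok] at hm
    split_ifs at hm with hl
    · exact hl
    · omega
  | leaf l => exfalso; have := l.isLt; simp only [tok] at hm; omega

lemma le_mid_lt_inv {n i : ℕ} (hi : i ≤ n) {m : Fin n} (hmi : (m : ℕ) < i) {y : StarV n}
    (h : fpath n i y <+: fpath n i (.mid m)) :
    ∃ l : Fin n, y = .mid l ∧ (l : ℕ) ≤ (m : ℕ) := by
  have hm : tok n i y ∈ fpath n i (StarV.mid m) := h.subset (tok_mem n i y)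
  simp only [fpath, fmid, if_pos hmi, List.mem_range] at hm
  cases y with
  | center => exfalso; have := m.isLt; simp only [tok] at hm; omega
  | mid l =>
    refine ⟨l, rfl, ?_⟩
    have := l.isLt; have := m.isLt
    simp only [tok] at hm
    split_ifs at hm with hl <;> omega
  | leaf l => exfalso; have := l.isLt; have := m.isLt; simp only [tok] at hm; omega

lemma le_mid_ge_inv {n i : ℕ} (hi : i ≤ n) {m : Fin n} (hmi : i ≤ (m : ℕ)) {y : StarV n}
    (h : fpath n i y <+: fpath n i (.mid m)) :
    y = .center ∨ ∃ l : Fin n, y = .mid l ∧ ((l : ℕ) < i ∨ l = m) := by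
  have hm : tok n i y ∈ fpath n i (StarV.mid m) := h.subset (tok_mem n i y)
  have : ¬ ((m : ℕ) < i) := by omega
  simp only [fpath, fmid, if_neg this, List.mem_append, List.mem_range,
    List.mem_cons, List.mem_singleton, List.not_mem_nil, or_false] at hm
  cases y with
  | center => exact Or.inl rfl
  | mid l =>
    refine Or.inr ⟨l, rfl, ?_⟩
    have := l.isLt; have := m.isLt
    simp only [tok] at hm
    split_ifs at hm with hl
    · exact Or.inl hl
    · right; exact Fin.ext (by omega)
  | leaf l => exfalso; have := l.isLt; have := m.isLt; simp only [tok] at hm; omega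

lemma le_leaf_inv {n i : ℕ} (hi : i ≤ n) {m : Fin n} {y : StarV n}
    (h : fpath n i y <+: fpath n i (.leaf m)) :
    y = .leaf m ∨ fpath n i y <+: fpath n i (.mid m) := by
  have : fpath n i (StarV.leaf m) = fpath n i (StarV.mid m) ++ [2 * n + 2 + (m : ℕ)] := rfl
  rw [this] at h
  rcases prefix_concat_cases h with h1 | h1
  · exact Or.inr h1
  · left
    have h3 : some (tok n i y) = some (tok n i (StarV.leaf m)) := by
      rw [← fpath_getLast, ← fpath_getLast, h1]; rfl
    exact tok_inj n i (Option.some.inj h3)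

end Stmt9Aux


namespace Stmt9Aux
open StarV Finset

lemma mid_injective {n : ℕ} : Function.Injective (StarV.mid (n := n)) :=
  fun _ _ h => StarV.mid.inj h

lemma sum_image_mid {n : ℕ} (P : Fin n → Prop) [DecidablePred P] (w : StarV n → ℕ) :
    ((Finset.univ.filter P).image StarV.mid).sum w = ∑ l ∈ Finset.univ.filter P, w (.mid l) :=
  Finset.sum_image (fun a _ b _ h => mid_injective h)

lemma filter_le_eq_lt_succ {n : ℕ} (m : ℕ) :
    (Finset.univ.filter (fun l : Fin n => (l : ℕ) ≤ m)) =
    (Finset.univ.filter (fun l : Fin n => (l : ℕ) < m + 1)) := by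
  ext l; simp [Nat.lt_succ_iff]

lemma TDi_le_iff {n i : ℕ} (hi : i ≤ n) (x y : StarV n) :
    (TDi n i hi).le x y ↔ fpath n i x <+: fpath n i y := Iff.rfl

lemma depth_TDi_le (n i : ℕ) (hi : i ≤ n) (w : StarV n → ℕ) :
    (TDi n i hi).weightedDepth w ≤ dval n w i := by
  classical
  apply csSup_le
  · exact ⟨0, ∅, fun x hx => absurd hx (Finset.notMem_empty x), by simp⟩
  rintro s ⟨C, hC, rfl⟩
  show (∑ x ∈ C, w x) ≤ dval n w i
  rcases C.eq_empty_or_nonempty with rfl | hne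
  · simp
  have haveA : ∀ j : Fin n, (j : ℕ) < i → midSum n w ((j : ℕ) + 1) + w (.leaf j) ≤ dval n w i :=
    fun j hj => le_sup_of_le_left (le_sup_of_le_left
      (Finset.le_sup (f := fun j : Fin n => midSum n w ((j : ℕ) + 1) + w (.leaf j))
        (Finset.mem_filter.mpr ⟨Finset.mem_univ _, hj⟩)))
  have haveB : ∀ j : Fin n, i ≤ (j : ℕ) →
      midSum n w i + w .center + w (.mid j) + w (.leaf j) ≤ dval n w i :=
    fun j hj => le_sup_of_le_left (le_sup_of_le_right
      (Finset.le_sup (f := fun j : Fin n => midSum n w i + w .center + w (.mid j) + w (.leaf j))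
        (Finset.mem_filter.mpr ⟨Finset.mem_univ _, hj⟩)))
  have haveCtr : w .center + midSum n w i ≤ dval n w i := by
    rcases Nat.lt_or_ge i n with hin | hin
    · have := haveB ⟨i, hin⟩ (le_refl _)
      omega
    · have hin' : i = n := le_antisymm hi hin
      have : midSum n w n + w .center ≤ dval n w i :=
        le_sup_of_le_right (by rw [if_pos hin'])
      rw [hin'] at this ⊢
      omega
  obtain ⟨x, hxC, hmax⟩ := exists_chain_max _ C hC hne
  cases x with
  | center =>
    have hsub : C ⊆ insert StarV.center
        ((Finset.univ.filter fun l : Fin n => (l : ℕ) < i).image StarV.mid) := by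
      intro y hy
      rcases le_center_inv hi (hmax y hy) with h | ⟨l, h, hl⟩ <;> subst h
      · exact Finset.mem_insert_self _ _
      · exact Finset.mem_insert_of_mem
          (Finset.mem_image_of_mem _ (Finset.mem_filter.mpr ⟨Finset.mem_univ _, hl⟩))
    have hsum := Finset.sum_le_sum_of_subset (f := w) hsub
    rw [Finset.sum_insert (by simp), sum_image_mid] at hsum
    have : (∑ l ∈ Finset.univ.filter (fun l : Fin n => (l : ℕ) < i), w (.mid l)) = midSum n w i := rfl
    rw [this] at hsum
    exact le_trans hsum haveCtr
  | mid m =>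
    by_cases hmi : (m : ℕ) < i
    · have hsub : C ⊆ (Finset.univ.filter fun l : Fin n => (l : ℕ) ≤ (m : ℕ)).image StarV.mid := by
        intro y hy
        obtain ⟨l, h, hl⟩ := le_mid_lt_inv hi hmi (hmax y hy)
        subst h
        exact Finset.mem_image_of_mem _ (Finset.mem_filter.mpr ⟨Finset.mem_univ _, hl⟩)
      have hsum := Finset.sum_le_sum_of_subset (f := w) hsub
      rw [sum_image_mid, filter_le_eq_lt_succ] at hsum
      have : (∑ l ∈ Finset.univ.filter (fun l : Fin n => (l : ℕ) < (m : ℕ) + 1), w (.mid l))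
          = midSum n w ((m : ℕ) + 1) := rfl
      rw [this] at hsum
      have := haveA m hmi
      omega
    · have hmge : i ≤ (m : ℕ) := le_of_not_gt hmi
      have hsub : C ⊆ insert StarV.center (insert (StarV.mid m)
          ((Finset.univ.filter fun l : Fin n => (l : ℕ) < i).image StarV.mid)) := by
        intro y hy
        rcases le_mid_ge_inv hi hmge (hmax y hy) with h | ⟨l, h, hl | hl⟩ <;> subst h
        · exact Finset.mem_insert_self _ _
        · exact Finset.mem_insert_of_mem (Finset.mem_insert_of_mem
            (Finset.mem_image_of_mem _ (Finset.mem_filter.mpr ⟨Finset.mem_univ _, hl⟩)))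
        · subst hl
          exact Finset.mem_insert_of_mem (Finset.mem_insert_self _ _)
      have hmid_notmem : StarV.mid m ∉
          (Finset.univ.filter fun l : Fin n => (l : ℕ) < i).image StarV.mid := by
        simp only [Finset.mem_image, Finset.mem_filter, Finset.mem_univ, true_and,
          StarV.mid.injEq, not_exists, not_and]
        rintro l hl rfl
        omega
      have hsum := Finset.sum_le_sum_of_subset (f := w) hsub
      rw [Finset.sum_insert (by simp), Finset.sum_insert hmid_notmem, sum_image_mid] at hsum
      have : (∑ l ∈ Finset.univ.filter (fun l : Fin n => (l : ℕ) < i), w (.mid l)) = midSum n w i := rfl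
      rw [this] at hsum
      have := haveB m hmge
      omega
  | leaf m =>
    have hsplit : ∀ y ∈ C, y = StarV.leaf m ∨ fpath n i y <+: fpath n i (.mid m) :=
      fun y hy => le_leaf_inv hi (hmax y hy)
    by_cases hmi : (m : ℕ) < i
    · have hsub : C ⊆ insert (StarV.leaf m)
          ((Finset.univ.filter fun l : Fin n => (l : ℕ) ≤ (m : ℕ)).image StarV.mid) := by
        intro y hy
        rcases hsplit y hy with h | h
        · subst h; exact Finset.mem_insert_self _ _
        · obtain ⟨l, hl1, hl⟩ := le_mid_lt_inv hi hmi h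
          subst hl1
          exact Finset.mem_insert_of_mem
            (Finset.mem_image_of_mem _ (Finset.mem_filter.mpr ⟨Finset.mem_univ _, hl⟩))
      have hsum := Finset.sum_le_sum_of_subset (f := w) hsub
      rw [Finset.sum_insert (by simp), sum_image_mid, filter_le_eq_lt_succ] at hsum
      have : (∑ l ∈ Finset.univ.filter (fun l : Fin n => (l : ℕ) < (m : ℕ) + 1), w (.mid l))
          = midSum n w ((m : ℕ) + 1) := rfl
      rw [this] at hsum
      have := haveA m hmi
      omega
    · have hmge : i ≤ (m : ℕ) := le_of_not_gt hmi
      have hsub : C ⊆ insert (StarV.leaf m) (insert StarV.center (insert (StarV.mid m)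
          ((Finset.univ.filter fun l : Fin n => (l : ℕ) < i).image StarV.mid))) := by
        intro y hy
        rcases hsplit y hy with h | h
        · subst h; exact Finset.mem_insert_self _ _
        · rcases le_mid_ge_inv hi hmge h with h1 | ⟨l, h1, hl | hl⟩ <;> subst h1
          · exact Finset.mem_insert_of_mem (Finset.mem_insert_self _ _)
          · exact Finset.mem_insert_of_mem (Finset.mem_insert_of_mem (Finset.mem_insert_of_mem
              (Finset.mem_image_of_mem _ (Finset.mem_filter.mpr ⟨Finset.mem_univ _, hl⟩))))
          · subst hl
            exact Finset.mem_insert_of_mem (Finset.mem_insert_of_mem (Finset.mem_insert_self _ _))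
      have hmid_notmem : StarV.mid m ∉
          (Finset.univ.filter fun l : Fin n => (l : ℕ) < i).image StarV.mid := by
        simp only [Finset.mem_image, Finset.mem_filter, Finset.mem_univ, true_and,
          StarV.mid.injEq, not_exists, not_and]
        rintro l hl rfl
        omega
      have hsum := Finset.sum_le_sum_of_subset (f := w) hsub
      rw [Finset.sum_insert (by simp), Finset.sum_insert (by simp),
        Finset.sum_insert hmid_notmem, sum_image_mid] at hsum
      have : (∑ l ∈ Finset.univ.filter (fun l : Fin n => (l : ℕ) < i), w (.mid l)) = midSum n w i := rfl
      rw [this] at hsum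
      have := haveB m hmge
      omega

end Stmt9Aux


namespace Stmt9Aux
open StarV Finset

lemma lower_bound (n : ℕ) (w : StarV n → ℕ)
    (hc : ∀ i j : Fin n, i ≤ j → w (StarV.leaf j) ≤ w (StarV.leaf i))
    (T : TDDecomp (subdivStar n)) :
    (Finset.range (n + 1)).inf' Finset.nonempty_range_add_one (dval n w) ≤ T.weightedDepth w := by
  classical
  have hcm : ∀ j : Fin n, T.le .center (.mid j) ∨ T.le (.mid j) .center :=
    fun j => T.adj_comparable _ _ (adj_center_mid j)
  have hml : ∀ j : Fin n, T.le (.mid j) (.leaf j) ∨ T.le (.leaf j) (.mid j) :=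
    fun j => T.adj_comparable _ _ (adj_mid_leaf j)
  set S : Finset (Fin n) := Finset.univ.filter (fun j => T.le (.mid j) .center) with hSdef
  have hSle : ∀ l ∈ S, T.le (.mid l) .center := fun l hl => (Finset.mem_filter.mp hl).2
  -- choose i0 : the length of the largest initial prefix contained in S
  obtain ⟨i0, hi0n, hP1, hP2, hP3⟩ :
      ∃ i0 : ℕ, i0 ≤ n ∧ (∀ l : Fin n, (l : ℕ) < i0 → l ∈ S) ∧
        (i0 = n → ∀ l : Fin n, l ∈ S) ∧ (∀ h : i0 < n, (⟨i0, h⟩ : Fin n) ∉ S) := by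
    by_cases hS : (Finset.univ \ S).Nonempty
    · set m := (Finset.univ \ S).min' hS with hm
      have hmmem : m ∈ Finset.univ \ S := Finset.min'_mem _ hS
      have hmS : m ∉ S := (Finset.mem_sdiff.mp hmmem).2
      refine ⟨(m : ℕ), le_of_lt m.isLt, ?_, ?_, ?_⟩
      · intro l hl
        by_contra hlS
        have : m ≤ l := Finset.min'_le _ _ (Finset.mem_sdiff.mpr ⟨Finset.mem_univ _, hlS⟩)
        rw [Fin.le_def] at this
        omega
      · intro h
        exfalso
        have := m.isLt
        omega
      · intro h
        have he : (⟨(m : ℕ), h⟩ : Fin n) = m := Fin.ext rfl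
        rw [he]
        exact hmS
    · have hall : ∀ l : Fin n, l ∈ S := by
        intro l
        by_contra hl
        exact hS ⟨l, Finset.mem_sdiff.mpr ⟨Finset.mem_univ _, hl⟩⟩
      exact ⟨n, le_refl n, fun l _ => hall l, fun _ l => hall l, fun h => absurd h (lt_irrefl n)⟩
  refine le_trans (Finset.inf'_le _ (Finset.mem_range.mpr (show i0 < n + 1 by omega))) ?_
  -- basic sums
  have hms0 : midSum n w i0 = ∑ l ∈ Finset.univ.filter (fun l : Fin n => (l : ℕ) < i0),
      w (.mid l) := rfl
  have hfilsub : Finset.univ.filter (fun l : Fin n => (l : ℕ) < i0) ⊆ S :=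
    fun l hl => hP1 l (Finset.mem_filter.mp hl).2
  have hmidS : midSum n w i0 ≤ ∑ l ∈ S, w (.mid l) := by
    rw [hms0]
    exact Finset.sum_le_sum_of_subset hfilsub
  -- key chain for k ∉ S : all of S, center, mid k, leaf k form a chain
  have key1 : ∀ k : Fin n, k ∉ S →
      (∑ l ∈ S, w (.mid l)) + w .center + w (.mid k) + w (.leaf k) ≤ T.weightedDepth w := by
    intro k hk
    have hck : T.le .center (.mid k) :=
      (hcm k).resolve_right (fun h => hk (Finset.mem_filter.mpr ⟨Finset.mem_univ _, h⟩))
    have hE : ∀ y ∈ insert (StarV.mid k) (insert StarV.center (S.image StarV.mid)),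
        T.le y (.mid k) := by
      intro y hy
      rcases Finset.mem_insert.mp hy with h | h
      · rw [h]; exact T.le_refl _
      rcases Finset.mem_insert.mp h with h | h
      · rw [h]; exact hck
      · obtain ⟨l, hl, h2⟩ := Finset.mem_image.mp h
        rw [← h2]
        exact T.le_trans _ _ _ (hSle l hl) hck
    have hchain : T.IsChain (insert (StarV.leaf k)
        (insert (StarV.mid k) (insert StarV.center (S.image StarV.mid)))) := by
      rcases hml k with h | h
      · exact chain_insert_top T (.mid k) (.leaf k) _ hE h
      · refine chain_below T (.mid k) _ (fun y hy => ?_)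
        rcases Finset.mem_insert.mp hy with h1 | h1
        · rw [h1]; exact h
        · exact hE y h1
    have hdep := sum_le_depth T w _ hchain
    have hleaf_notmem : (StarV.leaf k : StarV n) ∉
        insert (StarV.mid k) (insert StarV.center (S.image StarV.mid)) := by
      simp
    have hmid_notmem : (StarV.mid k : StarV n) ∉ insert StarV.center (S.image StarV.mid) := by
      simp only [Finset.mem_insert, Finset.mem_image, not_or, not_exists, not_and]
      exact ⟨fun h => (nomatch h), fun l hl h => hk (mid_injective h ▸ hl)⟩
    have hctr_notmem : (StarV.center : StarV n) ∉ S.image StarV.mid := by simp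
    rw [Finset.sum_insert hleaf_notmem, Finset.sum_insert hmid_notmem,
      Finset.sum_insert hctr_notmem,
      Finset.sum_image (fun a _ b _ h => mid_injective h)] at hdep
    omega
  -- Bound for the A-part
  have boundA : ∀ j : Fin n, (j : ℕ) < i0 →
      midSum n w ((j : ℕ) + 1) + w (.leaf j) ≤ T.weightedDepth w := by
    intro j hj
    have hMchain : T.IsChain ((Finset.univ.filter
        (fun l : Fin n => (l : ℕ) ≤ (j : ℕ))).image StarV.mid) := by
      refine chain_below T .center _ (fun y hy => ?_)
      obtain ⟨l, hl, h2⟩ := Finset.mem_image.mp hy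
      rw [← h2]
      have : (l : ℕ) < i0 := by
        have := (Finset.mem_filter.mp hl).2
        omega
      exact hSle l (hP1 l this)
    have hMne : ((Finset.univ.filter
        (fun l : Fin n => (l : ℕ) ≤ (j : ℕ))).image StarV.mid).Nonempty :=
      ⟨.mid j, Finset.mem_image_of_mem _ (Finset.mem_filter.mpr ⟨Finset.mem_univ _, le_refl _⟩)⟩
    obtain ⟨x, hxM, hxmax⟩ := exists_chain_max T _ hMchain hMne
    obtain ⟨ls, hlsmem, hlseq⟩ := Finset.mem_image.mp hxM
    subst hlseq
    have hlsj : (ls : ℕ) ≤ (j : ℕ) := (Finset.mem_filter.mp hlsmem).2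
    -- big chain : everything T-below mid ls, together with leaf ls
    have hDle : ∀ y ∈ (Finset.univ.filter
        (fun l : Fin n => T.le (.mid l) (.mid ls))).image StarV.mid, T.le y (.mid ls) := by
      intro y hy
      obtain ⟨l, hl, h2⟩ := Finset.mem_image.mp hy
      rw [← h2]
      exact (Finset.mem_filter.mp hl).2
    have hchain : T.IsChain (insert (StarV.leaf ls)
        ((Finset.univ.filter (fun l : Fin n => T.le (.mid l) (.mid ls))).image StarV.mid)) := by
      rcases hml ls with h | h
      · exact chain_insert_top T (.mid ls) (.leaf ls) _ hDle h
      · refine chain_below T (.mid ls) _ (fun y hy => ?_)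
        rcases Finset.mem_insert.mp hy with h1 | h1
        · rw [h1]; exact h
        · exact hDle y h1
    have hdep := sum_le_depth T w _ hchain
    have hleaf_notmem : (StarV.leaf ls : StarV n) ∉
        (Finset.univ.filter (fun l : Fin n => T.le (.mid l) (.mid ls))).image StarV.mid := by
      simp
    rw [Finset.sum_insert hleaf_notmem,
      Finset.sum_image (fun a _ b _ h => mid_injective h)] at hdep
    -- compare sums
    have hsub : Finset.univ.filter (fun l : Fin n => (l : ℕ) < (j : ℕ) + 1) ⊆
        Finset.univ.filter (fun l : Fin n => T.le (.mid l) (.mid ls)) := by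
      intro l hl
      refine Finset.mem_filter.mpr ⟨Finset.mem_univ _, ?_⟩
      have hlj : (l : ℕ) ≤ (j : ℕ) := by
        have := (Finset.mem_filter.mp hl).2
        omega
      exact hxmax (.mid l)
        (Finset.mem_image_of_mem _ (Finset.mem_filter.mpr ⟨Finset.mem_univ _, hlj⟩))
    have hsums : midSum n w ((j : ℕ) + 1) ≤
        ∑ l ∈ Finset.univ.filter (fun l : Fin n => T.le (.mid l) (.mid ls)), w (.mid l) :=
      Finset.sum_le_sum_of_subset hsub
    have hcls : w (.leaf j) ≤ w (.leaf ls) := hc ls j (Fin.le_def.mpr hlsj)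
    omega
  -- Bound for the B-part
  have boundB : ∀ j : Fin n, i0 ≤ (j : ℕ) →
      midSum n w i0 + w .center + w (.mid j) + w (.leaf j) ≤ T.weightedDepth w := by
    intro j hj
    have hi0lt : i0 < n := lt_of_le_of_lt hj j.isLt
    have hi'S : (⟨i0, hi0lt⟩ : Fin n) ∉ S := hP3 hi0lt
    by_cases hjS : j ∈ S
    · have h1 := key1 _ hi'S
      have h2 : midSum n w i0 + w (.mid j) ≤ ∑ l ∈ S, w (.mid l) := by
        have hins : insert j (Finset.univ.filter (fun l : Fin n => (l : ℕ) < i0)) ⊆ S :=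
          Finset.insert_subset hjS hfilsub
        have hjnot : j ∉ Finset.univ.filter (fun l : Fin n => (l : ℕ) < i0) := by
          simp only [Finset.mem_filter, Finset.mem_univ, true_and, not_lt]
          exact hj
        have hsum2 : (∑ l ∈ insert j (Finset.univ.filter (fun l : Fin n => (l : ℕ) < i0)),
            w (.mid l)) ≤ ∑ l ∈ S, w (.mid l) := Finset.sum_le_sum_of_subset hins
        rw [Finset.sum_insert hjnot] at hsum2
        rw [hms0]
        omega
      have hcj : w (.leaf j) ≤ w (.leaf (⟨i0, hi0lt⟩ : Fin n)) :=
        hc _ j (Fin.le_def.mpr hj)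
      omega
    · have h1 := key1 j hjS
      omega
  -- Bound for the C-part
  have boundC : i0 = n → midSum n w n + w .center ≤ T.weightedDepth w := by
    intro h
    have hall := hP2 h
    have hchain : T.IsChain (insert StarV.center (S.image StarV.mid)) := by
      refine chain_below T .center _ (fun y hy => ?_)
      rcases Finset.mem_insert.mp hy with h1 | h1
      · rw [h1]; exact T.le_refl _
      · obtain ⟨l, hl, h2⟩ := Finset.mem_image.mp h1
        rw [← h2]
        exact hSle l hl
    have hdep := sum_le_depth T w _ hchain
    have hctr_notmem : (StarV.center : StarV n) ∉ S.image StarV.mid := by simp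
    rw [Finset.sum_insert hctr_notmem,
      Finset.sum_image (fun a _ b _ h => mid_injective h)] at hdep
    have hSuniv : S = Finset.univ := Finset.eq_univ_iff_forall.mpr hall
    have hmsn : midSum n w n = ∑ l ∈ S, w (.mid l) := by
      rw [hSuniv]
      unfold midSum
      congr 1
      exact Finset.filter_true_of_mem (fun l _ => l.isLt)
    omega
  -- combine
  refine sup_le (sup_le ?_ ?_) ?_
  · exact Finset.sup_le (fun j hj => boundA j (Finset.mem_filter.mp hj).2)
  · exact Finset.sup_le (fun j hj => boundB j (Finset.mem_filter.mp hj).2)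
  · split
    · next h => exact boundC h
    · exact Nat.zero_le _

end Stmt9Aux

/-- Under the weight ordering assumptions, the weighted treedepth of the
1-subdivided star equals `min_{0 ≤ i ≤ n} d_i`. -/
theorem stmt9 (n : ℕ) (w : StarV n → ℕ) (hw : ∀ v, 0 < w v)
    (hc : ∀ i j : Fin n, i ≤ j → w (StarV.leaf j) ≤ w (StarV.leaf i))
    (hb : ∀ i j : Fin n, i ≤ j → w (StarV.leaf i) = w (StarV.leaf j) →
      w (StarV.mid i) ≤ w (StarV.mid j)) :
    wtd (subdivStar n) w = (Finset.range (n + 1)).inf' Finset.nonempty_range_add_one (dval n w) := by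
  apply le_antisymm
  · obtain ⟨i, hi, hmin⟩ := Finset.exists_mem_eq_inf' (Finset.nonempty_range_add_one) (dval n w)
    rw [hmin]
    have hin : i ≤ n := by
      have := Finset.mem_range.mp hi
      omega
    exact le_trans (Nat.sInf_le ⟨Stmt9Aux.TDi n i hin, rfl⟩) (Stmt9Aux.depth_TDi_le n i hin w)
  · refine le_csInf ⟨_, Stmt9Aux.TDi n 0 (Nat.zero_le n), rfl⟩ ?_
    rintro s ⟨T, rfl⟩
    exact Stmt9Aux.lower_bound n w hc T
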